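/- Let A be a (k-1)×(k-1) real positive definite matrix with entries a_{ij}, and let B = A^{-1}. Then (tr(B) + 1ᵀ B 1) · ( (Σ_{i} a_{ii})/k − (Σ_{i≠j} a_{ij})/(k(k−1)) ) ≥ k−1, where 1 is the all-ones column vector of length k−1. -/

import Mathlib

open Finset Matrix

theorem trace_inv_bound (k : ℕ) (hk : 2 ≤ k)
    (A : Matrix (Fin (k - 1)) (Fin (k - 1)) ℝ) (hA : A.PosDef)
    (B : Matrix (Fin (k - 1)) (Fin (k - 1)) ℝ) (hB : B = A⁻¹) :
    (B.trace + ∑ i, ∑ j, B i j) *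
      ((∑ i, A i i) / (k : ℝ) -
        (∑ i, ∑ j ∈ univ.filter (fun j => j ≠ i), A i j) / ((k : ℝ) * ((k : ℝ) - 1)))
      ≥ (k : ℝ) - 1 := by
  have hkR : (2:ℝ) ≤ (k:ℝ) := by exact_mod_cast hk
  have hk0 : (k:ℝ) ≠ 0 := by linarith
  have hk1 : (k:ℝ) - 1 ≠ 0 := by linarith
  have hcard : ((Fintype.card (Fin (k-1)) : ℝ)) = (k:ℝ) - 1 := by
    have : ((k - 1 : ℕ) : ℝ) = (k:ℝ) - 1 := by
      push_cast [Nat.cast_sub (by omega : 1 ≤ k)]; ring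
    simpa using this
  have hne : Nonempty (Fin (k-1)) := ⟨⟨0, by omega⟩⟩
  have hdet : IsUnit A.det := hA.det_pos.ne'.isUnit
  have hAB : A * B = 1 := by rw [hB]; exact A.mul_nonsing_inv hdet
  have hAsym : Aᵀ = A := by
    rw [← A.conjTranspose_eq_transpose_of_trivial]; exact hA.isHermitian
  -- vectors
  set u : Option (Fin (k-1)) → Fin (k-1) → ℝ := fun t => match t with
    | none => fun _ => 1
    | some i => fun j => if j = i then 1 else 0 with hu
  set w : Option (Fin (k-1)) → Fin (k-1) → ℝ := fun t => match t with
    | none => fun _ => (k:ℝ)⁻¹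
    | some i => fun j => (if j = i then 1 else 0) - (k:ℝ)⁻¹ with hw
  have hABv : ∀ t, A *ᵥ (B *ᵥ u t) = u t := by
    intro t; rw [Matrix.mulVec_mulVec, hAB, Matrix.one_mulVec]
  have expand : ∀ (l : ℝ) (t : Option (Fin (k-1))),
      (w t - l • (B *ᵥ u t)) ⬝ᵥ A *ᵥ (w t - l • (B *ᵥ u t))
        = w t ⬝ᵥ A *ᵥ w t - 2*l*(w t ⬝ᵥ u t) + l^2 * (u t ⬝ᵥ B *ᵥ u t) := by
    intro l t
    have h2 : (B *ᵥ u t) ⬝ᵥ (A *ᵥ w t) = u t ⬝ᵥ w t := by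
      rw [Matrix.dotProduct_mulVec, ← Matrix.mulVec_transpose, hAsym, hABv]
    have h3 : (B *ᵥ u t) ⬝ᵥ (A *ᵥ (B *ᵥ u t)) = u t ⬝ᵥ (B *ᵥ u t) := by
      rw [hABv, dotProduct_comm]
    rw [Matrix.mulVec_sub, Matrix.mulVec_smul, sub_dotProduct, dotProduct_sub,
      dotProduct_sub, smul_dotProduct, dotProduct_smul, dotProduct_smul,
      smul_dotProduct, hABv, h2]
    simp only [smul_eq_mul, dotProduct_comm (B *ᵥ u t) (u t), dotProduct_comm (u t) (w t)]
    ring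
  have key : ∀ l : ℝ, 0 ≤ (∑ t : Option (Fin (k-1)), w t ⬝ᵥ A *ᵥ w t)
      - 2*l*(∑ t : Option (Fin (k-1)), w t ⬝ᵥ u t)
      + l^2 * (∑ t : Option (Fin (k-1)), u t ⬝ᵥ B *ᵥ u t) := by
    intro l
    have h0 : 0 ≤ ∑ t : Option (Fin (k-1)),
        (w t - l • (B *ᵥ u t)) ⬝ᵥ A *ᵥ (w t - l • (B *ᵥ u t)) := by
      refine Finset.sum_nonneg fun t _ => ?_
      simpa using hA.posSemidef.dotProduct_mulVec_nonneg (w t - l • (B *ᵥ u t))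
    calc (0:ℝ) ≤ _ := h0
      _ = _ := by
        simp only [expand l, Finset.sum_add_distrib, Finset.sum_sub_distrib,
          Finset.mul_sum]
  -- the three sums
  have hQ : (∑ t : Option (Fin (k-1)), w t ⬝ᵥ u t) = (k:ℝ) - 1 := by
    rw [Fintype.sum_option]
    simp only [hu, hw, dotProduct, sub_mul, ite_mul, one_mul, zero_mul, mul_ite, mul_one,
      mul_zero, Finset.sum_sub_distrib, Finset.sum_ite_eq', Finset.mem_univ, if_true,
      Finset.sum_const, Finset.card_univ, nsmul_eq_mul]
    rw [hcard]
    field_simp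
    ring
  have hR : (∑ t : Option (Fin (k-1)), u t ⬝ᵥ B *ᵥ u t)
      = B.trace + ∑ i, ∑ j, B i j := by
    rw [Fintype.sum_option]
    simp only [hu, dotProduct, mulVec, one_mul, mul_ite, mul_one, mul_zero, ite_mul, zero_mul,
      Finset.sum_ite_eq', Finset.mem_univ, if_true, Matrix.trace, Matrix.diag]
    ring
  have hS : (∑ i, ∑ j ∈ univ.filter (fun j => j ≠ i), A i j)
      = (∑ i, ∑ j, A i j) - ∑ i, A i i := by
    rw [← Finset.sum_sub_distrib]
    refine Finset.sum_congr rfl fun i _ => ?_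
    rw [Finset.filter_ne', Finset.sum_erase_eq_sub (Finset.mem_univ i)]
  have hnone : w none ⬝ᵥ A *ᵥ w none = (k:ℝ)⁻¹ * ((k:ℝ)⁻¹ * ∑ p, ∑ q, A p q) := by
    simp only [hw, dotProduct, mulVec, Finset.mul_sum]
    refine Finset.sum_congr rfl fun p _ => Finset.sum_congr rfl fun q _ => ?_
    ring
  have hsome : ∀ i, w (some i) ⬝ᵥ A *ᵥ w (some i)
      = A i i - (k:ℝ)⁻¹ * (∑ q, A i q) - (k:ℝ)⁻¹ * (∑ p, A p i)
        + (k:ℝ)⁻¹ * ((k:ℝ)⁻¹ * ∑ p, ∑ q, A p q) := by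
    intro i
    have hinner : ∀ p, (A *ᵥ w (some i)) p = A p i - (k:ℝ)⁻¹ * ∑ q, A p q := by
      intro p
      simp only [hw, mulVec, dotProduct, mul_sub, mul_ite, mul_one, mul_zero,
        Finset.sum_sub_distrib, Finset.sum_ite_eq', Finset.mem_univ, if_true,
        Finset.mul_sum]
      simp [mul_comm]
    have step1 : w (some i) ⬝ᵥ A *ᵥ w (some i)
        = ∑ p, ((if p = i then (1:ℝ) else 0) - (k:ℝ)⁻¹) * (A p i - (k:ℝ)⁻¹ * ∑ q, A p q) := by
      refine Finset.sum_congr rfl fun p _ => ?_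
      rw [hinner p]
    have step2 : ∀ p, ((if p = i then (1:ℝ) else 0) - (k:ℝ)⁻¹) * (A p i - (k:ℝ)⁻¹ * ∑ q, A p q)
        = (if p = i then (A p i - (k:ℝ)⁻¹ * ∑ q, A p q) else 0)
          - (k:ℝ)⁻¹ * A p i + (k:ℝ)⁻¹ * ((k:ℝ)⁻¹ * ∑ q, A p q) := by
      intro p; split <;> ring
    rw [step1, Finset.sum_congr rfl fun p _ => step2 p, Finset.sum_add_distrib,
      Finset.sum_sub_distrib, Finset.sum_ite_eq' Finset.univ i, if_pos (Finset.mem_univ i)]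
    simp only [← Finset.mul_sum]
  have hP : (∑ t : Option (Fin (k-1)), w t ⬝ᵥ A *ᵥ w t)
      = ((k:ℝ) - 1) * ((∑ i, A i i) / (k : ℝ) -
        (∑ i, ∑ j ∈ univ.filter (fun j => j ≠ i), A i j) / ((k : ℝ) * ((k : ℝ) - 1))) := by
    rw [Fintype.sum_option, hnone]
    rw [Finset.sum_congr rfl fun i _ => hsome i]
    simp only [Finset.sum_add_distrib, Finset.sum_sub_distrib, Finset.sum_const,
      Finset.card_univ, nsmul_eq_mul, ← Finset.mul_sum]
    have hcomm : (∑ i : Fin (k-1), ∑ p : Fin (k-1), A p i)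
        = ∑ p : Fin (k-1), ∑ q : Fin (k-1), A p q := Finset.sum_comm
    rw [hcomm, hcard, hS]
    field_simp
    ring
  have hRpos : 0 < B.trace + ∑ i, ∑ j, B i j := by
    have hBpd : B.PosDef := hB ▸ hA.inv
    rw [← hR, Fintype.sum_option]
    have h1 : 0 < u none ⬝ᵥ B *ᵥ u none := by
      have hne0 : u none ≠ 0 := by
        intro h
        have := congrFun h ⟨0, by omega⟩
        simp [hu] at this
      simpa using hBpd.dotProduct_mulVec_pos hne0
    refine add_pos_of_pos_of_nonneg h1 (Finset.sum_nonneg fun i _ => ?_)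
    simpa using hBpd.posSemidef.dotProduct_mulVec_nonneg (u (some i))
  -- conclude
  have hkey := key (((k:ℝ) - 1) / (B.trace + ∑ i, ∑ j, B i j))
  rw [hQ, hR, hP] at hkey
  rw [ge_iff_le, ← sub_nonneg]
  have h := mul_le_mul_of_nonneg_left hkey (le_of_lt hRpos)
  set R0 := B.trace + ∑ i, ∑ j, B i j
  set T := ((∑ i, A i i) / (k : ℝ) -
        (∑ i, ∑ j ∈ univ.filter (fun j => j ≠ i), A i j) / ((k : ℝ) * ((k : ℝ) - 1)))
  have hfield : R0 * (((k:ℝ)-1) * T - 2*(((k:ℝ)-1)/R0)*((k:ℝ)-1) + (((k:ℝ)-1)/R0)^2 * R0)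
      = ((k:ℝ)-1) * (R0 * T - ((k:ℝ)-1)) := by
    field_simp
    ring
  rw [mul_zero, hfield] at h
  nlinarith [h, hRpos]
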